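/- Every element of K(c) yields positive definite Y and Z: if (k₃,k₄,k₅) ∈ K(c) with c > 0, then Y(k₃,k₄,k₅,c) and Z(k₃,k₄,k₅) are positive definite. -/

import Mathlib

open Matrix

/-- Sylvester's criterion for a 3×3 real symmetric matrix. -/
lemma posDef3_aux (A B C D E F : ℝ)
    (h1 : 0 < A) (h2 : 0 < A*D - B^2)
    (h3 : 0 < A*(D*F - E^2) - B*(B*F - E*C) + C*(B*E - D*C)) :
    (!![A, B, C; B, D, E; C, E, F]).PosDef := by
  rw [posDef_iff_dotProduct_mulVec]
  constructor
  · ext i j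
    fin_cases i <;> fin_cases j <;> rfl
  · intro x hx
    have hxyz : ¬ (x 0 = 0 ∧ x 1 = 0 ∧ x 2 = 0) := by
      intro ⟨h0, h1', h2'⟩
      apply hx
      ext i
      fin_cases i <;> simpa
    simp only [star_trivial, mulVec, dotProduct, Fin.sum_univ_three, Matrix.of_apply,
      Matrix.cons_val', Matrix.cons_val_zero, Matrix.cons_val_one, Matrix.head_cons,
      Matrix.empty_val', Matrix.cons_val_fin_one, Matrix.head_fin_const,
      Matrix.cons_val_two, Matrix.tail_cons]
    set a := x 0 with ha
    set b := x 1 with hb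
    set e := x 2 with he
    have key : A*(A*D - B^2)*(a*(A*a + B*b + C*e) + b*(B*a + D*b + E*e) + e*(C*a + E*b + F*e))
        = (A*D - B^2)*(A*a + B*b + C*e)^2 + ((A*D - B^2)*b + (A*E - B*C)*e)^2
          + (A*(A*(D*F - E^2) - B*(B*F - E*C) + C*(B*E - D*C)))*e^2 := by ring
    have hAD : 0 < A*(A*D - B^2) := mul_pos h1 h2
    by_cases he0 : e = 0
    · by_cases hb0 : b = 0
      · have ha0 : a ≠ 0 := fun h => hxyz ⟨h, hb0, he0⟩
        have haa : 0 < a * a := mul_self_pos.mpr ha0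
        simp only [he0, hb0] at key ⊢
        nlinarith [key, hAD, mul_pos (mul_pos h2 (mul_pos h1 h1)) haa]
      · have hbb : 0 < b * b := mul_self_pos.mpr hb0
        simp only [he0] at key ⊢
        nlinarith [key, hAD, mul_nonneg h2.le (sq_nonneg (A*a + B*b)),
          mul_pos (mul_pos h2 h2) hbb]
    · have hee : 0 < e * e := mul_self_pos.mpr he0
      nlinarith [mul_nonneg h2.le (sq_nonneg (A*a + B*b + C*e)),
        sq_nonneg ((A*D - B^2)*b + (A*E - B*C)*e),
        mul_pos (mul_pos h1 h3) hee]

/-- The 3×3 symmetric matrix `Y(k₃,k₄,k₅,c)` from the paper. -/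
noncomputable def Ymat (k3 k4 k5 c : ℝ) : Matrix (Fin 3) (Fin 3) ℝ :=
  !![2*k3^2 - 2*k4 - k5^2, k3*k4 - k3*k5^2,            -(k3*k5);
     k3*k4 - k3*k5^2,      2*k4^2 - 2*k3*k5 - k3^2*k5^2, -(k4*k5);
     -(k3*k5),             -(k4*k5),                     2*k5^2 - c^2]

/-- The 3×3 symmetric matrix `Z(k₃,k₄,k₅)` from the paper. -/
noncomputable def Zmat (k3 k4 k5 : ℝ) : Matrix (Fin 3) (Fin 3) ℝ :=
  !![k3,  k4,        -k5;
     k4,  k3*k4 - k5, -(k3*k5);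
     -k5, -(k3*k5),   k4*k5]

/-- The set `K(c)` of admissible gains from the paper. -/
def Kset (c : ℝ) : Set (ℝ × ℝ × ℝ) :=
  {k | k.2.2 > c ∧ k.1 > 0 ∧
    k.2.1^2 - 2*k.1*k.2.2 - 2*k.1^2*k.2.2^2 > 0 ∧
    k.1^2*k.2.1 - k.1*k.2.2 - k.2.1^2 > 0 ∧
    k.1^2*k.2.1^2 - k.1^3*k.2.2 - k.2.1^3 > 0 ∧
    k.1^2 - 2*k.2.1 - 2*k.2.2^2 > 0}

/-- If `(k₃,k₄,k₅) ∈ K(c)` with `c > 0`, then `Y(k₃,k₄,k₅,c)` and `Z(k₃,k₄,k₅)`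
are positive definite. -/
theorem stmt8 (k3 k4 k5 c : ℝ) (hc : 0 < c) (hm : (k3, k4, k5) ∈ Kset c) :
    (Ymat k3 k4 k5 c).PosDef ∧ (Zmat k3 k4 k5).PosDef := by
  obtain ⟨h5c, hp, hC1, hC2, hC3, hC4⟩ := hm
  simp only at h5c hp hC1 hC2 hC3 hC4
  set p := k3
  set q := k4
  set r := k5
  have hr : 0 < r := lt_trans hc h5c
  have hq : 0 < q := by nlinarith [mul_pos hp hr, sq_nonneg q, mul_pos hp hp]
  have hrc : 0 < r^2 - c^2 := by nlinarith [mul_pos (sub_pos.mpr h5c) (show (0:ℝ) < r + c by linarith)]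
  have hp2 : 0 < p^2 := by positivity
  have hq2 : 0 < q^2 := by positivity
  have hr2 : 0 < r^2 := by positivity
  constructor
  · rw [Ymat]
    apply posDef3_aux
    · nlinarith [hC4, hp2, hr2]
    · nlinarith [mul_pos hC1 hC4, mul_pos hq2 hC4, mul_pos (mul_pos hp2 hr2) hC4,
        mul_pos hp2 hC1, mul_pos hr2 hC1, mul_pos (mul_pos hp2 hp2) hr2,
        mul_pos hq2 hr2, mul_pos (mul_pos hp2 hq) hr2]
    · nlinarith [mul_pos hrc (mul_pos hC1 hC4), mul_pos hrc (mul_pos hq2 hC4),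
        mul_pos hrc (mul_pos (mul_pos hp2 hr2) hC4),
        mul_pos hrc (mul_pos hp2 hC1), mul_pos hrc (mul_pos hr2 hC1),
        mul_pos hrc (mul_pos (mul_pos hp2 hp2) hr2),
        mul_pos hrc (mul_pos hq2 hr2), mul_pos hrc (mul_pos (mul_pos hp2 hq) hr2),
        mul_pos hr2 (mul_pos hC1 hC4), mul_pos (mul_pos hr2 hr2) hC1,
        mul_pos (mul_pos hp2 (mul_pos hr2 hr2)) hC4]
  · rw [Zmat]
    apply posDef3_aux
    · exact hp
    · nlinarith [hC2]
    · nlinarith [mul_pos hr (mul_pos hr hr), mul_pos hr hC3]
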